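/- Let P be a probability measure on a measurable space Ω and let κ ∈ (0,∞). Define H_κ : [0,1] → [0,∞] by H_κ(0) = ∞, H_κ(v) = κ(1+κ)^κ · v^{−1} · (−ln v)^{−1−κ} for v ∈ (0, e^{−1−κ}], and H_κ(v) = 0 for v ∈ (e^{−1−κ}, 1]. If f is a p-function w.r.t. P, then H_κ ∘ f is an e-function w.r.t. P, i.e. ∫ H_κ(f) dP ≤ 1. -/

import Mathlib

open MeasureTheory
open scoped ENNReal

/-- The function `H_κ : [0,1] → [0,∞]`:
`H_κ(0) = ∞`, `H_κ(v) = κ(1+κ)^κ · v⁻¹ · (−ln v)^{−1−κ}` for `v ∈ (0, e^{−1−κ}]`,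
and `H_κ(v) = 0` for `v ∈ (e^{−1−κ}, 1]`. -/
noncomputable def Hfun (κ : ℝ) (v : ℝ) : ℝ≥0∞ :=
  if v = 0 then ⊤
  else if v ≤ Real.exp (-(1 + κ)) then
    ENNReal.ofReal (κ * (1 + κ) ^ κ * v⁻¹ * (-Real.log v) ^ (-(1 + κ)))
  else 0

namespace Stmt1Aux

noncomputable def t0 (κ : ℝ) : ℝ := Real.exp (-(1 + κ))

noncomputable def cst (κ : ℝ) : ℝ := κ * (1 + κ) ^ κ

noncomputable def Hr (κ v : ℝ) : ℝ := cst κ * v⁻¹ * (-Real.log v) ^ (-(1 + κ))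

noncomputable def Wfn (κ v : ℝ) : ℝ :=
  cst κ * (v ^ 2)⁻¹ *
    ((-Real.log v) ^ (-(1 + κ)) - (1 + κ) * (-Real.log v) ^ (-(2 + κ)))

noncomputable def wfn (κ v : ℝ) : ℝ :=
  cst κ * v⁻¹ *
    ((-Real.log v) ^ (-(1 + κ)) - (1 + κ) * (-Real.log v) ^ (-(2 + κ)))

noncomputable def Gfn (κ v : ℝ) : ℝ :=
  (1 + κ) ^ κ * (-Real.log v) ^ (-κ) - cst κ * (-Real.log v) ^ (-(1 + κ))

variable {κ : ℝ}

lemma t0_pos : 0 < t0 κ := Real.exp_pos _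

lemma t0_lt_one (hκ : 0 < κ) : t0 κ < 1 := by
  rw [t0, Real.exp_lt_one_iff]; linarith

lemma cst_pos (hκ : 0 < κ) : 0 < cst κ :=
  mul_pos hκ (Real.rpow_pos_of_pos (by linarith) _)

lemma log_le (hκ : 0 < κ) {x : ℝ} (hx : 0 < x) (hx' : x ≤ t0 κ) :
    1 + κ ≤ -Real.log x := by
  have h := Real.log_le_log hx hx'
  rw [t0, Real.log_exp] at h
  linarith

lemma neg_log_pos (hκ : 0 < κ) {x : ℝ} (hx : 0 < x) (hx' : x ≤ t0 κ) :
    0 < -Real.log x := lt_of_lt_of_le (by linarith) (log_le hκ hx hx')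

lemma Wfn_nonneg (hκ : 0 < κ) {x : ℝ} (hx : 0 < x) (hx' : x ≤ t0 κ) :
    0 ≤ Wfn κ x := by
  have hL := neg_log_pos hκ hx hx'
  have hL2 := log_le hκ hx hx'
  have key : (1 + κ) * (-Real.log x) ^ (-(2 + κ)) ≤ (-Real.log x) ^ (-(1 + κ)) := by
    have e : (-(1 + κ) : ℝ) = 1 + (-(2 + κ)) := by ring
    have : (-Real.log x) ^ (-(1 + κ)) = (-Real.log x) * (-Real.log x) ^ (-(2 + κ)) := by
      rw [e, Real.rpow_one_add' hL.le (by intro h; nlinarith [h])]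
    rw [this]
    apply mul_le_mul_of_nonneg_right hL2 (le_of_lt (Real.rpow_pos_of_pos hL _))
  apply mul_nonneg (mul_nonneg (le_of_lt (cst_pos hκ)) (by positivity))
  linarith

lemma wfn_nonneg (hκ : 0 < κ) {x : ℝ} (hx : 0 < x) (hx' : x ≤ t0 κ) :
    0 ≤ wfn κ x := by
  have h := Wfn_nonneg hκ hx hx'
  have : wfn κ x = x * Wfn κ x := by
    unfold wfn Wfn; field_simp
  rw [this]; exact mul_nonneg hx.le h

lemma wfn_eq (hκ : 0 < κ) {x : ℝ} (hx : 0 < x) : wfn κ x = x * Wfn κ x := by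
  unfold wfn Wfn; field_simp

lemma hasDerivAt_negLog_rpow {x p : ℝ} (hx : 0 < x) (hx1 : x < 1) :
    HasDerivAt (fun v => (-Real.log v) ^ p)
      (p * (-Real.log x) ^ (p - 1) * (-x⁻¹)) x := by
  have hL : -Real.log x ≠ 0 := by
    have := Real.log_neg hx hx1; linarith
  have h1 : HasDerivAt (fun v : ℝ => -Real.log v) (-x⁻¹) x := by
    exact (Real.hasDerivAt_log hx.ne').neg
  exact (Real.hasDerivAt_rpow_const (p := p) (Or.inl hL)).comp x h1

lemma hasDerivAt_Hr (hκ : 0 < κ) {x : ℝ} (hx : 0 < x) (hx1 : x < 1) :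
    HasDerivAt (Hr κ) (-Wfn κ x) x := by
  have h1 : HasDerivAt (fun v : ℝ => cst κ * v⁻¹) (cst κ * (-(x ^ 2)⁻¹)) x :=
    (hasDerivAt_inv hx.ne').const_mul (cst κ)
  have h2 := hasDerivAt_negLog_rpow (p := -(1 + κ)) hx hx1
  have h := h1.mul h2
  refine h.congr_deriv ?_
  have e1 : (-(1 + κ) - 1 : ℝ) = -(2 + κ) := by ring
  rw [e1]
  unfold Wfn
  field_simp
  ring

lemma hasDerivAt_Gfn (hκ : 0 < κ) {x : ℝ} (hx : 0 < x) (hx1 : x < 1) :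
    HasDerivAt (Gfn κ) (wfn κ x) x := by
  have h1 := (hasDerivAt_negLog_rpow (p := -κ) hx hx1).const_mul ((1 + κ) ^ κ : ℝ)
  have h2 := (hasDerivAt_negLog_rpow (p := -(1 + κ)) hx hx1).const_mul (cst κ)
  have h := h1.sub h2
  refine h.congr_deriv ?_
  have e1 : (-κ - 1 : ℝ) = -(1 + κ) := by ring
  have e2 : (-(1 + κ) - 1 : ℝ) = -(2 + κ) := by ring
  rw [e1, e2]
  unfold wfn cst
  field_simp

lemma continuousOn_aux (p : ℝ) :
    ContinuousOn (fun v => (-Real.log v) ^ p) (Set.Ioo (0:ℝ) 1) := by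
  apply ContinuousOn.rpow_const
  · exact (Real.continuousOn_log.mono (by intro x hx; simp; exact (hx.1).ne')).neg
  · intro x hx
    left
    have := Real.log_neg hx.1 hx.2
    intro h; rw [neg_eq_zero] at h; linarith

lemma continuousOn_Wfn : ContinuousOn (Wfn κ) (Set.Ioo (0:ℝ) 1) := by
  apply ContinuousOn.mul
  · apply ContinuousOn.mul continuousOn_const
    apply ContinuousOn.inv₀ (by fun_prop)
    intro x hx; exact pow_ne_zero _ hx.1.ne'
  · exact (continuousOn_aux _).sub (continuousOn_const.mul (continuousOn_aux _))

lemma continuousOn_wfn : ContinuousOn (wfn κ) (Set.Ioo (0:ℝ) 1) := by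
  apply ContinuousOn.mul
  · apply ContinuousOn.mul continuousOn_const
    apply ContinuousOn.inv₀ (by fun_prop)
    intro x hx; exact hx.1.ne'
  · exact (continuousOn_aux _).sub (continuousOn_const.mul (continuousOn_aux _))

lemma Icc_subset (hκ : 0 < κ) {a b : ℝ} (ha : 0 < a) (hb : b ≤ t0 κ) :
    Set.Icc a b ⊆ Set.Ioo (0:ℝ) 1 := by
  intro x hx
  exact ⟨lt_of_lt_of_le ha hx.1, lt_of_le_of_lt (hx.2.trans hb) (t0_lt_one hκ)⟩

lemma ftc_W (hκ : 0 < κ) {a b : ℝ} (ha : 0 < a) (hab : a ≤ b) (hb : b ≤ t0 κ) :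
    ∫ x in a..b, Wfn κ x = Hr κ a - Hr κ b := by
  have hsub := Icc_subset hκ ha hb
  have : ∫ x in a..b, Wfn κ x = (fun v => -Hr κ v) b - (fun v => -Hr κ v) a := by
    apply intervalIntegral.integral_eq_sub_of_hasDerivAt
    · intro x hx
      rw [Set.uIcc_of_le hab] at hx
      have hx' := hsub hx
      exact (hasDerivAt_Hr hκ hx'.1 hx'.2).neg.congr_deriv (neg_neg _)
    · exact ((continuousOn_Wfn.mono hsub).mono
        (by rw [Set.uIcc_of_le hab])).intervalIntegrable
  rw [this]; ring

lemma ftc_w (hκ : 0 < κ) {a b : ℝ} (ha : 0 < a) (hab : a ≤ b) (hb : b ≤ t0 κ) :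
    ∫ x in a..b, wfn κ x = Gfn κ b - Gfn κ a := by
  have hsub := Icc_subset hκ ha hb
  apply intervalIntegral.integral_eq_sub_of_hasDerivAt
  · intro x hx
    rw [Set.uIcc_of_le hab] at hx
    have hx' := hsub hx
    exact hasDerivAt_Gfn hκ hx'.1 hx'.2
  · exact ((continuousOn_wfn.mono hsub).mono
      (by rw [Set.uIcc_of_le hab])).intervalIntegrable

lemma lint_W (hκ : 0 < κ) {a b : ℝ} (ha : 0 < a) (hab : a ≤ b) (hb : b ≤ t0 κ) :
    ∫⁻ x in Set.Ioo a b, ENNReal.ofReal (Wfn κ x) = ENNReal.ofReal (Hr κ a - Hr κ b) := by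
  have hsub := Icc_subset hκ ha hb
  have hint : IntegrableOn (Wfn κ) (Set.Ioo a b) := by
    apply ((continuousOn_Wfn.mono hsub).integrableOn_Icc).mono_set Set.Ioo_subset_Icc_self
  rw [← MeasureTheory.ofReal_integral_eq_lintegral_ofReal hint]
  · congr 1
    rw [← MeasureTheory.integral_Ioc_eq_integral_Ioo,
      ← intervalIntegral.integral_of_le hab]
    exact ftc_W hκ ha hab hb
  · rw [Filter.EventuallyLE, ae_restrict_iff' measurableSet_Ioo]
    filter_upwards with x hx
    exact Wfn_nonneg hκ (lt_trans ha hx.1) (hx.2.le.trans hb)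

lemma lint_w (hκ : 0 < κ) {a b : ℝ} (ha : 0 < a) (hab : a ≤ b) (hb : b ≤ t0 κ) :
    ∫⁻ x in Set.Ioo a b, ENNReal.ofReal (wfn κ x) = ENNReal.ofReal (Gfn κ b - Gfn κ a) := by
  have hsub := Icc_subset hκ ha hb
  have hint : IntegrableOn (wfn κ) (Set.Ioo a b) := by
    apply ((continuousOn_wfn.mono hsub).integrableOn_Icc).mono_set Set.Ioo_subset_Icc_self
  rw [← MeasureTheory.ofReal_integral_eq_lintegral_ofReal hint]
  · congr 1
    rw [← MeasureTheory.integral_Ioc_eq_integral_Ioo,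
      ← intervalIntegral.integral_of_le hab]
    exact ftc_w hκ ha hab hb
  · rw [Filter.EventuallyLE, ae_restrict_iff' measurableSet_Ioo]
    filter_upwards with x hx
    exact wfn_nonneg hκ (lt_trans ha hx.1) (hx.2.le.trans hb)

lemma Hr_tendsto (hκ : 0 < κ) : Filter.Tendsto (Hr κ) (nhdsWithin 0 (Set.Ioi 0)) Filter.atTop := by
  have h1 : Filter.Tendsto (fun a : ℝ => -Real.log a) (nhdsWithin 0 (Set.Ioi 0))
      Filter.atTop :=
    Filter.tendsto_neg_atBot_atTop.comp Real.tendsto_log_nhdsGT_zero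
  have h2 : Filter.Tendsto (fun x : ℝ => Real.exp x / x ^ (1 + κ)) Filter.atTop
      Filter.atTop := tendsto_exp_div_rpow_atTop (1 + κ)
  have h3 := (h2.comp h1).const_mul_atTop (cst_pos hκ)
  apply h3.congr'
  have hmem : Set.Ioo (0:ℝ) 1 ∈ nhdsWithin (0:ℝ) (Set.Ioi 0) :=
    Ioo_mem_nhdsGT (by norm_num)
  filter_upwards [hmem] with a ha
  have hL : 0 < -Real.log a := by
    have := Real.log_neg ha.1 ha.2; linarith
  have hexp : Real.exp (-Real.log a) = a⁻¹ := by
    rw [Real.exp_neg, Real.exp_log ha.1]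
  unfold Hr
  simp only [Function.comp]
  rw [hexp, Real.rpow_neg hL.le, div_eq_mul_inv]
  ring

lemma lint_W_top (hκ : 0 < κ) :
    ∫⁻ x in Set.Ioo 0 (t0 κ), ENNReal.ofReal (Wfn κ x) = ⊤ := by
  set I := ∫⁻ x in Set.Ioo 0 (t0 κ), ENNReal.ofReal (Wfn κ x) with hI
  by_contra hne
  have hlt : I < ⊤ := lt_top_iff_ne_top.2 hne
  have hbig : ∀ᶠ a in nhdsWithin (0:ℝ) (Set.Ioi 0),
      I.toReal + 1 + Hr κ (t0 κ) ≤ Hr κ a :=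
    (Hr_tendsto hκ).eventually_ge_atTop _
  have hmem : Set.Ioo (0:ℝ) (t0 κ) ∈ nhdsWithin (0:ℝ) (Set.Ioi 0) :=
    Ioo_mem_nhdsGT t0_pos
  obtain ⟨a, ha1, ha2⟩ := (hbig.and hmem).exists
  have hle : ENNReal.ofReal (Hr κ a - Hr κ (t0 κ)) ≤ I := by
    rw [← lint_W hκ ha2.1 ha2.2.le (le_refl _)]
    exact lintegral_mono_set (Set.Ioo_subset_Ioo le_rfl le_rfl |>.trans
      (Set.Ioo_subset_Ioo ha2.1.le le_rfl))
  have : ENNReal.ofReal (I.toReal + 1) ≤ I :=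
    le_trans (ENNReal.ofReal_le_ofReal (by linarith)) hle
  have h2 : I < ENNReal.ofReal (I.toReal + 1) := by
    conv_lhs => rw [← ENNReal.ofReal_toReal hne]
    exact ENNReal.ofReal_lt_ofReal_iff (by positivity) |>.2 (by linarith)
  exact absurd (lt_of_lt_of_le h2 this) (lt_irrefl _)

lemma Gfn_t0 (hκ : 0 < κ) : Gfn κ (t0 κ) = 1 / (1 + κ) := by
  have h1 : (0:ℝ) < 1 + κ := by linarith
  unfold Gfn cst t0
  rw [Real.log_exp]
  have e : (- -(1 + κ) : ℝ) = (1 + κ) := by ring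
  rw [e]
  have ha : (1 + κ:ℝ) ^ κ * (1 + κ) ^ (-κ) = 1 := by
    rw [← Real.rpow_add h1]; simp
  have hb : (1 + κ:ℝ) ^ κ * (1 + κ) ^ (-(1 + κ)) = (1 + κ)⁻¹ := by
    rw [← Real.rpow_add h1, show κ + -(1 + κ) = (-1:ℝ) by ring, Real.rpow_neg_one]
  rw [mul_assoc κ, hb, ha]
  field_simp
  ring

lemma Gfn_nonneg (hκ : 0 < κ) {a : ℝ} (ha : 0 < a) (ha' : a ≤ t0 κ) :
    0 ≤ Gfn κ a := by
  have hL := neg_log_pos hκ ha ha'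
  have hL2 := log_le hκ ha ha'
  have key : (-Real.log a) ^ (-κ) = (-Real.log a) * (-Real.log a) ^ (-(1 + κ)) := by
    rw [show (-κ : ℝ) = 1 + (-(1 + κ)) by ring,
      Real.rpow_one_add' hL.le (by intro h; nlinarith [h])]
  unfold Gfn cst
  rw [key]
  have hp : (0:ℝ) < (1 + κ) ^ κ := Real.rpow_pos_of_pos (by linarith) _
  have hq : (0:ℝ) < (-Real.log a) ^ (-(1 + κ)) := Real.rpow_pos_of_pos hL _
  nlinarith [mul_pos hp hq]

lemma Hr_t0_mul (hκ : 0 < κ) : Hr κ (t0 κ) * t0 κ = κ / (1 + κ) := by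
  have h1 : (0:ℝ) < 1 + κ := by linarith
  unfold Hr cst t0
  rw [Real.log_exp]
  have e : (- -(1 + κ) : ℝ) = (1 + κ) := by ring
  rw [e]
  have hb : (1 + κ:ℝ) ^ κ * (1 + κ) ^ (-(1 + κ)) = (1 + κ)⁻¹ := by
    rw [← Real.rpow_add h1, show κ + -(1 + κ) = (-1:ℝ) by ring, Real.rpow_neg_one]
  have he : Real.exp (-(1 + κ)) ≠ 0 := (Real.exp_pos _).ne'
  rw [show κ * (1 + κ) ^ κ * (Real.exp (-(1 + κ)))⁻¹ * (1 + κ) ^ (-(1 + κ)) *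
      Real.exp (-(1 + κ)) = κ * ((1 + κ) ^ κ * (1 + κ) ^ (-(1 + κ))) *
      ((Real.exp (-(1 + κ)))⁻¹ * Real.exp (-(1 + κ))) by ring,
    hb, inv_mul_cancel₀ he, mul_one, div_eq_mul_inv]

lemma Hr_t0_nonneg (hκ : 0 < κ) : 0 ≤ Hr κ (t0 κ) := by
  have hL := (neg_log_pos hκ (t0_pos (κ := κ)) le_rfl).le
  exact mul_nonneg (mul_nonneg (cst_pos hκ).le
    (inv_nonneg.2 (t0_pos (κ := κ)).le)) (Real.rpow_nonneg hL _)

lemma Wfn_measurable : Measurable (Wfn κ) := by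
  unfold Wfn
  measurability

lemma lint_w_bound (hκ : 0 < κ) :
    ∫⁻ x in Set.Ioo 0 (t0 κ), ENNReal.ofReal (wfn κ x) ≤ ENNReal.ofReal (1 / (1 + κ)) := by
  set ν := volume.withDensity (fun x => ENNReal.ofReal (wfn κ x)) with hν
  have hwm : Measurable fun x => ENNReal.ofReal (wfn κ x) := by unfold wfn; measurability
  have happ : ∀ s : Set ℝ, MeasurableSet s →
      ν s = ∫⁻ x in s, ENNReal.ofReal (wfn κ x) := fun s hs =>
    MeasureTheory.withDensity_apply _ hs
  set s : ℕ → Set ℝ := fun n => Set.Ioo (t0 κ / (n + 1)) (t0 κ) with hs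
  have hmono : Monotone s := by
    intro n m hnm
    apply Set.Ioo_subset_Ioo _ le_rfl
    apply div_le_div_of_nonneg_left t0_pos.le (by positivity)
    exact_mod_cast by omega
  have hunion : (⋃ n, s n) = Set.Ioo 0 (t0 κ) := by
    ext x
    simp only [Set.mem_iUnion, Set.mem_Ioo, hs]
    constructor
    · rintro ⟨n, h1, h2⟩
      exact ⟨lt_trans (div_pos t0_pos (by positivity)) h1, h2⟩
    · rintro ⟨h1, h2⟩
      obtain ⟨n, hn⟩ := exists_nat_gt (t0 κ / x)
      refine ⟨n, ?_, h2⟩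
      rw [div_lt_iff₀ h1] at hn
      rw [div_lt_iff₀ (by positivity)]
      nlinarith
  rw [← happ _ measurableSet_Ioo, ← hunion,
    hmono.measure_iUnion]
  apply iSup_le
  intro n
  rw [happ _ measurableSet_Ioo]
  have ha : 0 < t0 κ / ((n:ℝ) + 1) := div_pos t0_pos (by positivity)
  have hab : t0 κ / (n + 1) ≤ t0 κ := by
    apply div_le_self t0_pos.le; exact_mod_cast by omega
  rw [lint_w hκ ha hab le_rfl]
  apply ENNReal.ofReal_le_ofReal
  have := Gfn_nonneg hκ ha hab
  rw [Gfn_t0 hκ] at *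
  linarith [Gfn_t0 hκ]

end Stmt1Aux

open Stmt1Aux

/-- if `f` is a p-function w.r.t. the probability measure `P`
and `κ ∈ (0,∞)`, then `H_κ ∘ f` is an e-function w.r.t. `P`. -/
theorem stmt1 {Ω : Type*} [MeasurableSpace Ω] (P : Measure Ω) [IsProbabilityMeasure P]
    (κ : ℝ) (hκ : 0 < κ)
    (f : Ω → ℝ) (hf : Measurable f) (hf01 : ∀ ω, f ω ∈ Set.Icc (0 : ℝ) 1)
    (hfp : ∀ ε : ℝ, 0 < ε → P {ω | f ω ≤ ε} ≤ ENNReal.ofReal ε) :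
    ∫⁻ ω, Hfun κ (f ω) ∂P ≤ 1 := by
  classical
  have hT1 : (0:ℝ) < 1 + κ := by linarith
  -- pointwise bound
  have key : ∀ ω, Hfun κ (f ω) ≤
      (Set.indicator {ω' | f ω' ≤ t0 κ} (fun _ => ENNReal.ofReal (Hr κ (t0 κ))) ω)
      + ∫⁻ ε in Set.Ioo 0 (t0 κ),
          (if f ω ≤ ε then ENNReal.ofReal (Wfn κ ε) else 0) := by
    intro ω
    obtain ⟨hv0, hv1⟩ := hf01 ω
    rcases eq_or_lt_of_le hv0 with hveq | hvpos
    · -- f ω = 0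
      have hB : (∫⁻ ε in Set.Ioo 0 (t0 κ),
          (if f ω ≤ ε then ENNReal.ofReal (Wfn κ ε) else 0)) = ⊤ := by
        rw [MeasureTheory.setLIntegral_congr_fun measurableSet_Ioo
          (fun ε hε => if_pos (by rw [← hveq]; exact hε.1.le))]
        exact lint_W_top hκ
      rw [hB]
      simp
    · by_cases hvT : f ω ≤ t0 κ
      · -- 0 < f ω ≤ t0
        have hHfun : Hfun κ (f ω) = ENNReal.ofReal (Hr κ (f ω)) := by
          have hvT' : f ω ≤ Real.exp (-(1 + κ)) := hvT
          rw [Hfun, if_neg hvpos.ne', if_pos hvT']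
          rfl
        have hA : Set.indicator {ω' | f ω' ≤ t0 κ}
            (fun _ => ENNReal.ofReal (Hr κ (t0 κ))) ω = ENNReal.ofReal (Hr κ (t0 κ)) := by
          simp only [Set.indicator_apply, Set.mem_setOf_eq, if_pos hvT]
        have hB : ENNReal.ofReal (Hr κ (f ω) - Hr κ (t0 κ)) ≤
            ∫⁻ ε in Set.Ioo 0 (t0 κ),
              (if f ω ≤ ε then ENNReal.ofReal (Wfn κ ε) else 0) := by
          rw [← lint_W hκ hvpos hvT le_rfl]
          refine le_trans (le_of_eq ?_)
            (lintegral_mono_set (Set.Ioo_subset_Ioo hv0 le_rfl))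
          exact (MeasureTheory.setLIntegral_congr_fun measurableSet_Ioo
            (fun ε hε => if_pos hε.1.le)).symm
        have hdiff : 0 ≤ Hr κ (f ω) - Hr κ (t0 κ) := by
          rw [← ftc_W hκ hvpos hvT le_rfl]
          apply intervalIntegral.integral_nonneg hvT
          intro x hx
          exact Wfn_nonneg hκ (lt_of_lt_of_le hvpos hx.1) hx.2
        rw [hHfun, hA]
        calc ENNReal.ofReal (Hr κ (f ω))
            = ENNReal.ofReal (Hr κ (t0 κ) + (Hr κ (f ω) - Hr κ (t0 κ))) := by ring_nf
          _ = ENNReal.ofReal (Hr κ (t0 κ)) + ENNReal.ofReal (Hr κ (f ω) - Hr κ (t0 κ)) :=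
              ENNReal.ofReal_add (Hr_t0_nonneg hκ) hdiff
          _ ≤ _ := add_le_add_right hB _
      · -- t0 < f ω : Hfun = 0
        have : Hfun κ (f ω) = 0 := by
          have hvT' : ¬ f ω ≤ Real.exp (-(1 + κ)) := hvT
          rw [Hfun, if_neg hvpos.ne', if_neg hvT']
        rw [this]
        exact zero_le
  have hsetT : MeasurableSet {ω' | f ω' ≤ t0 κ} := measurableSet_le hf measurable_const
  calc ∫⁻ ω, Hfun κ (f ω) ∂P
      ≤ ∫⁻ ω, ((Set.indicator {ω' | f ω' ≤ t0 κ}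
            (fun _ => ENNReal.ofReal (Hr κ (t0 κ))) ω)
          + ∫⁻ ε in Set.Ioo 0 (t0 κ),
              (if f ω ≤ ε then ENNReal.ofReal (Wfn κ ε) else 0)) ∂P :=
        lintegral_mono key
    _ = (∫⁻ ω, Set.indicator {ω' | f ω' ≤ t0 κ}
            (fun _ => ENNReal.ofReal (Hr κ (t0 κ))) ω ∂P)
        + ∫⁻ ω, (∫⁻ ε in Set.Ioo 0 (t0 κ),
            (if f ω ≤ ε then ENNReal.ofReal (Wfn κ ε) else 0)) ∂P :=
        lintegral_add_left ((measurable_const).indicator hsetT) _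
    _ ≤ ENNReal.ofReal (κ / (1 + κ)) + ENNReal.ofReal (1 / (1 + κ)) := by
        apply add_le_add
        · rw [lintegral_indicator_const hsetT]
          calc ENNReal.ofReal (Hr κ (t0 κ)) * P {ω' | f ω' ≤ t0 κ}
              ≤ ENNReal.ofReal (Hr κ (t0 κ)) * ENNReal.ofReal (t0 κ) :=
                mul_le_mul_right (hfp _ t0_pos) _
            _ = ENNReal.ofReal (Hr κ (t0 κ) * t0 κ) :=
                (ENNReal.ofReal_mul (Hr_t0_nonneg hκ)).symm
            _ = ENNReal.ofReal (κ / (1 + κ)) := by rw [Hr_t0_mul hκ]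
        · have hswap : ∫⁻ ω, (∫⁻ ε in Set.Ioo 0 (t0 κ),
              (if f ω ≤ ε then ENNReal.ofReal (Wfn κ ε) else 0)) ∂P
              = ∫⁻ ε in Set.Ioo 0 (t0 κ), (∫⁻ ω,
                  (if f ω ≤ ε then ENNReal.ofReal (Wfn κ ε) else 0) ∂P) := by
            apply MeasureTheory.lintegral_lintegral_swap
            apply Measurable.aemeasurable
            apply Measurable.ite
            · exact measurableSet_le (hf.comp measurable_fst) measurable_snd
            · exact (ENNReal.measurable_ofReal.comp Wfn_measurable).comp measurable_snd
            · exact measurable_const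
          rw [hswap]
          have hinner : ∀ ε : ℝ, (∫⁻ ω,
              (if f ω ≤ ε then ENNReal.ofReal (Wfn κ ε) else 0) ∂P)
              = ENNReal.ofReal (Wfn κ ε) * P {ω | f ω ≤ ε} := by
            intro ε
            rw [← lintegral_indicator_const (measurableSet_le hf measurable_const)]
            apply lintegral_congr
            intro ω
            simp only [Set.indicator_apply, Set.mem_setOf_eq]
          calc ∫⁻ ε in Set.Ioo 0 (t0 κ), (∫⁻ ω,
                (if f ω ≤ ε then ENNReal.ofReal (Wfn κ ε) else 0) ∂P)
              ≤ ∫⁻ ε in Set.Ioo 0 (t0 κ), ENNReal.ofReal (wfn κ ε) := by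
                apply MeasureTheory.setLIntegral_mono' measurableSet_Ioo
                intro ε hε
                rw [hinner ε]
                calc ENNReal.ofReal (Wfn κ ε) * P {ω | f ω ≤ ε}
                    ≤ ENNReal.ofReal (Wfn κ ε) * ENNReal.ofReal ε :=
                      mul_le_mul_right (hfp ε hε.1) _
                  _ = ENNReal.ofReal (Wfn κ ε * ε) :=
                      (ENNReal.ofReal_mul (Wfn_nonneg hκ hε.1 hε.2.le)).symm
                  _ = ENNReal.ofReal (wfn κ ε) := by
                      rw [wfn_eq hκ hε.1, mul_comm]
            _ ≤ ENNReal.ofReal (1 / (1 + κ)) := lint_w_bound hκ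
    _ = ENNReal.ofReal (κ / (1 + κ) + 1 / (1 + κ)) :=
        (ENNReal.ofReal_add (by positivity) (by positivity)).symm
    _ = 1 := by
        have h1 : κ / (1 + κ) + 1 / (1 + κ) = 1 := by
          rw [← add_div]
          field_simp
          ring
        rw [h1]
        exact ENNReal.ofReal_one
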